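/- For every c ∈ kˣ, c is a norm from K (i.e. c ∈ N_{K/k}(Kˣ)) if and only if c, viewed as an element of k'ˣ, is a norm from K' (i.e. c ∈ N_{K'/k'}(K'ˣ)). Equivalently, the quadratic character of kˣ attached to the quadratic extension K/k and the quadratic character of k'ˣ attached to K'/k' agree on kˣ. -/

import Mathlib

open IntermediateField

lemma aux_univ_two {G : Type*} [Group G] [Fintype G] [DecidableEq G] (hcard : Fintype.card G = 2)
    {g : G} (hg : g ≠ 1) : (Finset.univ : Finset G) = {1, g} := by
  symm
  apply Finset.eq_of_subset_of_card_le (Finset.subset_univ _)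
  rw [Finset.card_univ, hcard, Finset.card_insert_of_notMem (by simpa using hg.symm),
    Finset.card_singleton]

lemma aux_prod_two {G M : Type*} [Group G] [Fintype G] [CommMonoid M] [DecidableEq G]
    (hcard : Fintype.card G = 2) {g : G} (hg : g ≠ 1) (f : G → M) :
    ∏ σ : G, f σ = f 1 * f g := by
  rw [aux_univ_two hcard hg, Finset.prod_pair (Ne.symm hg)]

lemma aux_norm_inv {k K : Type*} [Field k] [Field K] [Algebra k K]
    (a : K) (ha : a ≠ 0) : Algebra.norm k a⁻¹ = (Algebra.norm k a)⁻¹ := by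
  symm
  apply inv_eq_of_mul_eq_one_right
  rw [← map_mul, mul_inv_cancel₀ ha, map_one]

theorem stmt_5 (p : ℕ) [Fact p.Prime]
    (k : Type) [Field k] [Algebra ℚ_[p] k] [FiniteDimensional ℚ_[p] k]
    (K' : Type) [Field K'] [Algebra k K'] [FiniteDimensional k K'] [IsGalois k K']
    (n : ℕ) (hodd : Odd n)
    (α β : K' ≃ₐ[k] K')
    (hcomm : α * β = β * α)
    (hordα : orderOf α = 2) (hordβ : orderOf β = n)
    (hcard : Nat.card (K' ≃ₐ[k] K') = 2 * n)
    (hgen : ∀ g : K' ≃ₐ[k] K', g ∈ Subgroup.closure ({α, β} : Set (K' ≃ₐ[k] K')))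
    (K : IntermediateField k K') (hK : K = fixedField (Subgroup.zpowers β))
    (k' : IntermediateField k K') (hk' : k' = fixedField (Subgroup.zpowers α))
    (c : k) (hc : c ≠ 0) :
    (∃ x : K, Algebra.norm k x = c) ↔
      (∃ y : K', Algebra.norm (↥k') y = algebraMap k (↥k') c) := by
  classical
  subst hK hk'
  set K : IntermediateField k K' := fixedField (Subgroup.zpowers β) with hKdef
  set k' : IntermediateField k K' := fixedField (Subgroup.zpowers α) with hk'def
  -- the Galois group is commutative
  have hstep : ∀ g : K' ≃ₐ[k] K', ∀ y ∈ ({α, β} : Set (K' ≃ₐ[k] K')), y * g = g * y := by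
    intro g
    have hsub : Subgroup.closure ({α, β} : Set (K' ≃ₐ[k] K')) ≤
        Subgroup.centralizer ({α, β} : Set (K' ≃ₐ[k] K')) := by
      apply (Subgroup.closure_le _).mpr
      rintro x (rfl | rfl) <;>
        refine Subgroup.mem_centralizer_iff.mpr ?_ <;>
        rintro y (rfl | rfl)
      · rfl
      · exact hcomm.symm
      · exact hcomm
      · rfl
    exact Subgroup.mem_centralizer_iff.mp (hsub (hgen g))
  have hC : ∀ g h : K' ≃ₐ[k] K', g * h = h * g := by
    intro g h
    have hsub : Subgroup.closure ({α, β} : Set (K' ≃ₐ[k] K')) ≤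
        Subgroup.centralizer ({g} : Set (K' ≃ₐ[k] K')) := by
      apply (Subgroup.closure_le _).mpr
      rintro x hx
      refine Subgroup.mem_centralizer_iff.mpr ?_
      intro y hy
      rw [Set.mem_singleton_iff] at hy
      subst hy
      exact (hstep y x hx).symm
    exact Subgroup.mem_centralizer_iff.mp (hsub (hgen h)) g rfl
  haveI hβnormal : (Subgroup.zpowers β).Normal := by
    constructor
    intro x hx g
    rwa [hC g x, mul_assoc, mul_inv_cancel, mul_one]
  have hn0 : n ≠ 0 := by rintro rfl; simp at hodd
  -- degrees
  have hdim : Module.finrank k K' = 2 * n := by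
    rw [← IsGalois.card_aut_eq_finrank, hcard]
  have hdimK : Module.finrank K K' = n := by
    rw [hKdef, IntermediateField.finrank_fixedField_eq_card,
      Nat.card_zpowers, hordβ]
  have hdimk' : Module.finrank k' K' = 2 := by
    rw [hk'def, IntermediateField.finrank_fixedField_eq_card,
      Nat.card_zpowers, hordα]
  have htower : Module.finrank k K * Module.finrank K K' = Module.finrank k K' :=
    Module.finrank_mul_finrank k K K'
  have hdimKk : Module.finrank k K = 2 := by
    rw [hdimK, hdim] at htower
    exact Nat.eq_of_mul_eq_mul_right (Nat.pos_of_ne_zero hn0) htower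
  have htower' : Module.finrank k k' * Module.finrank k' K' = Module.finrank k K' :=
    Module.finrank_mul_finrank k k' K'
  have hdimk'k : Module.finrank k k' = n := by
    rw [hdimk', hdim, mul_comm 2 n] at htower'
    exact Nat.eq_of_mul_eq_mul_right (by norm_num) htower'
  -- α as an element of Gal(K'/k')
  have hαmem : α ∈ k'.fixingSubgroup := by
    intro x
    exact x.2 ⟨α, Subgroup.mem_zpowers α⟩
  set α' : K' ≃ₐ[k'] K' := IntermediateField.fixingSubgroupEquiv k' ⟨α, hαmem⟩ with hα'def
  have hα'apply : ∀ y : K', α' y = α y := fun y => rfl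
  have hαne1 : α ≠ 1 := by
    intro h
    rw [h, orderOf_one] at hordα
    norm_num at hordα
  have hα'ne1 : α' ≠ 1 := by
    intro h
    apply hαne1
    ext y
    have := congrArg (fun (f : K' ≃ₐ[k'] K') => f y) h
    simpa [hα'apply] using this
  have hcardGal' : Fintype.card (K' ≃ₐ[k'] K') = 2 := by
    rw [← Nat.card_eq_fintype_card, IsGalois.card_aut_eq_finrank, hdimk']
  -- restriction of α to K
  have hnormalK : Normal k K := inferInstance
  set αK : K ≃ₐ[k] K := α.restrictNormal K with hαKdef
  have hαKcomm : ∀ x : K, algebraMap K K' (αK x) = α (algebraMap K K' x) :=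
    fun x => AlgEquiv.restrictNormal_commutes α K x
  have hαKne1 : αK ≠ 1 := by
    intro h
    have hfix : α ∈ K.fixingSubgroup := by
      intro x
      have := hαKcomm x
      rw [h] at this
      simpa using this.symm
    rw [hKdef, IntermediateField.fixingSubgroup_fixedField] at hfix
    have : orderOf α ∣ orderOf β := orderOf_dvd_of_mem_zpowers hfix
    rw [hordα, hordβ] at this
    exact (Nat.not_even_iff_odd.mpr hodd) (even_iff_two_dvd.mpr this)
  have hcardGalK : Fintype.card (K ≃ₐ[k] K) = 2 := by
    rw [← Nat.card_eq_fintype_card, IsGalois.card_aut_eq_finrank, hdimKk]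
  constructor
  · rintro ⟨x, hx⟩
    refine ⟨algebraMap K K' x, ?_⟩
    apply (algebraMap k' K').injective
    rw [Algebra.norm_eq_prod_automorphisms, aux_prod_two hcardGal' hα'ne1]
    have hK2 : algebraMap K K' (algebraMap k K (Algebra.norm k x)) =
        algebraMap K K' (x * αK x) := by
      rw [Algebra.norm_eq_prod_automorphisms, aux_prod_two hcardGalK hαKne1]
      rfl
    rw [hx, map_mul, hαKcomm, ← IsScalarTower.algebraMap_apply] at hK2
    rw [← IsScalarTower.algebraMap_apply, AlgEquiv.one_apply, hα'apply, ← hK2]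
  · rintro ⟨y, hy⟩
    have h2 : Algebra.norm k y = c ^ n := by
      rw [← Algebra.norm_norm (R := k) (S := k') (a := y), hy, Algebra.norm_algebraMap, hdimk'k]
    have h3 : Algebra.norm k (Algebra.norm K y) = c ^ n := by
      rw [Algebra.norm_norm (R := k) (S := K) (a := y), h2]
    set z : K := Algebra.norm K y with hzdef
    set w : K := algebraMap k K c with hwdef
    have hw0 : w ≠ 0 := by
      simp only [hwdef, ne_eq, map_eq_zero]
      exact hc
    have hnw : Algebra.norm k w = c ^ 2 := by
      rw [hwdef, Algebra.norm_algebraMap, hdimKk]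
    obtain ⟨m, hm⟩ := hodd
    refine ⟨z * (w⁻¹) ^ m, ?_⟩
    rw [map_mul, map_pow, aux_norm_inv w hw0, h3, hnw, hm]
    rw [pow_succ, ← inv_pow, ← pow_mul, mul_right_comm, ← mul_pow, mul_inv_cancel₀ hc, one_pow, one_mul]
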